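/- Each element of a DBMIS feasible-set violation can be repaired by at most Δ+1 deletions: let S be feasible (independent in M, satisfying all hyperedge bounds g), and let x ∉ S with {x} feasible. Then there is a set Z ⊆ S with |Z| ≤ Δ+1 such that (S + x) \ Z is feasible: remove one element from each of the at most Δ tight hyperedges containing x, and at most one further element to restore matroid independence. -/

import Mathlib

open scoped Classical

/-- Feasibility for the Degree Bounded Matroid Independent Set problem. -/
def DBMISFeasible {V : Type*} (M : Matroid V) (H : Finset (Finset V))
    (g : Finset V → ℕ) (S : Finset V) : Prop :=
  M.Indep ↑S ∧ ∀ e ∈ H, (S ∩ e).card ≤ g e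

theorem dbmis_repair {V : Type*} [DecidableEq V] (M : Matroid V)
    (H : Finset (Finset V)) (g : Finset V → ℕ) (Δ : ℕ) (S : Finset V) (x : V)
    (hdegx : (H.filter (fun e => x ∈ e)).card ≤ Δ)
    (hS : DBMISFeasible M H g S) (hx : x ∉ S)
    (hxfeas : DBMISFeasible M H g {x}) :
    ∃ Z ⊆ S, Z.card ≤ Δ + 1 ∧ DBMISFeasible M H g ((insert x S) \ Z) := by
  obtain ⟨hSind, hSdeg0⟩ := hS
  obtain ⟨hxind, hxdeg0⟩ := hxfeas
  -- harmonize `DecidableEq` instances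
  have hSdeg : ∀ e ∈ H, (S ∩ e).card ≤ g e := by
    intro e he; convert hSdeg0 e he using 2; ext v; simp
  have hxdeg : ∀ e ∈ H, (({x} : Finset V) ∩ e).card ≤ g e := by
    intro e he; convert hxdeg0 e he using 2; ext v; simp
  -- ground set facts
  have hxE : x ∈ M.E := hxind.subset_ground (by simp)
  have hground : (insert x ↑S : Set V) ⊆ M.E :=
    Set.insert_subset hxE hSind.subset_ground
  -- extend {x} to a basis I of insert x S
  have hxsing : M.Indep ({x} : Set V) := by simpa using hxind
  obtain ⟨I, hI, hxI⟩ := Matroid.Indep.subset_isBasis_of_subset hxsing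
    (by simp : ({x} : Set V) ⊆ insert x ↑S) hground
  have hxmemI : x ∈ I := hxI rfl
  have hIfin : I.Finite := (S.finite_toSet.insert x).subset hI.subset
  -- S extends to a basis J with |J| = |I|, so |S| ≤ |I|
  obtain ⟨J, hJ, hSJ⟩ := hSind.subset_isBasis_of_subset
    (Set.subset_insert x ↑S) hground
  have hcard : (S.card : ℕ∞) ≤ I.encard := by
    calc (S.card : ℕ∞) = (↑S : Set V).encard := by
          rw [Set.encard_coe_eq_coe_finsetCard]
      _ ≤ J.encard := Set.encard_le_encard hSJ
      _ = I.encard := hJ.encard_eq_encard hI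
  -- the at-most-one removal for matroid independence
  set Y : Finset V := S.filter (fun v => v ∉ I) with hY
  have hYsub : Y ⊆ S := Finset.filter_subset _ _
  have hYcard : Y.card ≤ 1 := by
    have hIsub : I ⊆ insert x ↑S := hI.subset
    have h1 : (↑Y : Set V) ⊆ (insert x ↑S : Set V) \ I := by
      intro v hv
      simp only [hY, Finset.coe_filter, Set.mem_setOf_eq] at hv
      exact ⟨Set.mem_insert_of_mem _ hv.1, hv.2⟩
    have h2 : ((insert x ↑S : Set V) \ I).encard + I.encard
        = (insert x ↑S : Set V).encard :=
      Set.encard_diff_add_encard_of_subset hIsub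
    have h3 : (insert x ↑S : Set V).encard ≤ (S.card : ℕ∞) + 1 := by
      calc (insert x ↑S : Set V).encard ≤ (↑S : Set V).encard + 1 :=
            Set.encard_insert_le _ _
        _ = (S.card : ℕ∞) + 1 := by rw [Set.encard_coe_eq_coe_finsetCard]
    have hIne : I.encard ≠ ⊤ := hIfin.encard_eq_coe_toFinset_card ▸ (by simp)
    have h4 : ((insert x ↑S : Set V) \ I).encard ≤ 1 := by
      have := h2.le.trans h3
      have h5 : ((insert x ↑S : Set V) \ I).encard + I.encard ≤ 1 + I.encard := by
        calc ((insert x ↑S : Set V) \ I).encard + I.encard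
            = (insert x ↑S : Set V).encard := h2
          _ ≤ (S.card : ℕ∞) + 1 := h3
          _ ≤ I.encard + 1 := by exact add_le_add_left hcard 1
          _ = 1 + I.encard := by ring
      exact WithTop.le_of_add_le_add_right hIne (by exact h5)
    have : (↑Y : Set V).encard ≤ 1 := (Set.encard_le_encard h1).trans h4
    rw [Set.encard_coe_eq_coe_finsetCard] at this
    exact_mod_cast this
  -- choice of an element for each tight hyperedge containing x
  set T : Finset (Finset V) := H.filter (fun e => x ∈ e ∧ (S ∩ e).card = g e) with hT
  have hTne : ∀ e ∈ T, (S ∩ e).Nonempty := by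
    intro e he
    rw [hT, Finset.mem_filter] at he
    have hge : 1 ≤ g e := by
      have h := hxdeg e he.1
      simpa [Finset.singleton_inter_of_mem he.2.1] using h
    rw [← Finset.card_pos, he.2.2]; exact hge
  set f : Finset V → V := fun e => if h : (S ∩ e).Nonempty then h.choose else x with hf
  have hfmem : ∀ e ∈ T, f e ∈ S ∩ e := by
    intro e he
    simp only [hf, dif_pos (hTne e he)]
    exact (hTne e he).choose_spec
  set Z : Finset V := T.image f ∪ Y with hZ
  refine ⟨Z, ?_, ?_, ?_, ?_⟩
  · -- Z ⊆ S
    rw [hZ]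
    apply Finset.union_subset _ hYsub
    intro v hv
    obtain ⟨e, he, rfl⟩ := Finset.mem_image.mp hv
    exact (Finset.mem_inter.mp (hfmem e he)).1
  · -- card bound
    calc Z.card ≤ (T.image f).card + Y.card := Finset.card_union_le _ _
      _ ≤ T.card + 1 := add_le_add Finset.card_image_le hYcard
      _ ≤ Δ + 1 := by
          apply add_le_add_left
          refine le_trans ?_ hdegx
          apply Finset.card_le_card
          intro e he
          rw [hT, Finset.mem_filter] at he
          exact Finset.mem_filter.mpr ⟨he.1, he.2.1⟩
  · -- independence
    apply hI.indep.subset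
    intro v hv
    simp only [Finset.coe_sdiff, Set.mem_diff, Finset.mem_coe,
      Finset.mem_sdiff, Finset.mem_insert] at hv
    obtain ⟨hv1, hv2⟩ := hv
    rcases hv1 with rfl | hvS
    · exact hxmemI
    · by_contra hvI
      exact hv2 (Finset.mem_union_right _ (Finset.mem_filter.mpr ⟨hvS, hvI⟩))
  · -- degree constraints
    intro e he
    suffices hgoal : ((insert x S \ Z) ∩ e).card ≤ g e by
      convert hgoal using 2
      ext v; simp
    by_cases hxe : x ∈ e
    · by_cases htight : (S ∩ e).card = g e
      · -- tight: f e is removed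
        have heT : e ∈ T := Finset.mem_filter.mpr ⟨he, hxe, htight⟩
        have hfe := hfmem e heT
        have hfeS : f e ∈ S := (Finset.mem_inter.mp hfe).1
        have hfeZ : f e ∈ Z := Finset.mem_union_left _ (Finset.mem_image_of_mem f heT)
        refine le_trans (Finset.card_le_card
          (fun v hv => ?_ : _ ⊆ (insert x (S ∩ e)).erase (f e))) ?_
        · rw [Finset.mem_inter, Finset.mem_sdiff, Finset.mem_insert] at hv
          rw [Finset.mem_erase, Finset.mem_insert]
          refine ⟨fun h => hv.1.2 (h ▸ hfeZ), ?_⟩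
          rcases hv.1.1 with rfl | hvS
          · exact Or.inl rfl
          · exact Or.inr (Finset.mem_inter.mpr ⟨hvS, hv.2⟩)
        · have hmem : f e ∈ insert x (S ∩ e) := Finset.mem_insert_of_mem hfe
          rw [Finset.card_erase_of_mem hmem]
          have h1 := Finset.card_insert_le x (S ∩ e)
          have h2 : 1 ≤ g e := by
            have h := hxdeg e he
            simpa [Finset.singleton_inter_of_mem hxe] using h
          omega
      · -- slack
        have hlt : (S ∩ e).card < g e := lt_of_le_of_ne (hSdeg e he) htight
        refine le_trans (Finset.card_le_card
          (fun v hv => ?_ : _ ⊆ insert x (S ∩ e))) ?_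
        · rw [Finset.mem_inter, Finset.mem_sdiff, Finset.mem_insert] at hv
          rw [Finset.mem_insert]
          rcases hv.1.1 with rfl | hvS
          · exact Or.inl rfl
          · exact Or.inr (Finset.mem_inter.mpr ⟨hvS, hv.2⟩)
        · exact le_trans (Finset.card_insert_le _ _) hlt
    · -- x ∉ e
      refine le_trans (Finset.card_le_card (fun v hv => ?_)) (hSdeg e he)
      rw [Finset.mem_inter, Finset.mem_sdiff, Finset.mem_insert] at hv
      rcases hv.1.1 with rfl | hvS
      · exact absurd hv.2 hxe
      · exact Finset.mem_inter.mpr ⟨hvS, hv.2⟩
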